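/- Let a ∈ ℝ_{>0}^{3+3n} and λ ∈ ℝ_{>0}^{3n}. Then b ∈ ℝ_{>0}^{3+3n} is a positive steady state of ẋ = S diag(κ(a,λ)) Φ(x) if and only if ln b − ln a lies in the column space of L, equivalently, if and only if there exists g ∈ ℝ_{>0}^3 with b = diag(g^L) a, i.e., b_j = (g^L)_j a_j for all j = 1,…,3+3n. -/

import Mathlib

open Finset

namespace Phos

noncomputable section

/-- Standard basis vector of `ℝ^N`, with `1`-based index `j`. -/
def e (N : ℕ) (j : ℕ) : Fin N → ℝ := fun m => if (m : ℕ) + 1 = j then 1 else 0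

/-- Standard basis vector of `ℕ^N`, with `1`-based index `j`. -/
def eN (N : ℕ) (j : ℕ) : Fin N → ℕ := fun m => if (m : ℕ) + 1 = j then 1 else 0

/-- The stoichiometric matrix `S` of the `n`-site sequential distributive
phosphorylation network.  For each `i = 1,…,n` the six columns `6(i−1)+1,…,6(i−1)+6`
are `e_{1+3i}−e_1−e_{3i−1}`, `e_1+e_{3i−1}−e_{1+3i}`, `e_1+e_{2+3i}−e_{1+3i}`,
`e_{3+3i}−e_3−e_{2+3i}`, `e_3+e_{2+3i}−e_{3+3i}`, `e_3+e_{3i−1}−e_{3+3i}`. -/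
def Smat (n : ℕ) : Matrix (Fin (3*n+3)) (Fin (6*n)) ℝ :=
  Matrix.of fun m r =>
    (![e (3*n+3) (1+3*((r : ℕ)/6+1)) - e (3*n+3) 1 - e (3*n+3) (3*((r : ℕ)/6+1)-1),
       e (3*n+3) 1 + e (3*n+3) (3*((r : ℕ)/6+1)-1) - e (3*n+3) (1+3*((r : ℕ)/6+1)),
       e (3*n+3) 1 + e (3*n+3) (2+3*((r : ℕ)/6+1)) - e (3*n+3) (1+3*((r : ℕ)/6+1)),
       e (3*n+3) (3+3*((r : ℕ)/6+1)) - e (3*n+3) 3 - e (3*n+3) (2+3*((r : ℕ)/6+1)),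
       e (3*n+3) 3 + e (3*n+3) (2+3*((r : ℕ)/6+1)) - e (3*n+3) (3+3*((r : ℕ)/6+1)),
       e (3*n+3) 3 + e (3*n+3) (3*((r : ℕ)/6+1)-1) - e (3*n+3) (3+3*((r : ℕ)/6+1))])
      ⟨(r : ℕ) % 6, Nat.mod_lt _ (by norm_num)⟩ m

/-- The rate exponent matrix `Y`: for each `i = 1,…,n` the six columns
`6(i−1)+1,…,6(i−1)+6` are `e_1+e_{3i−1}`, `e_{1+3i}`, `e_{1+3i}`,
`e_3+e_{2+3i}`, `e_{3+3i}`, `e_{3+3i}`. -/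
def Ymat (n : ℕ) : Matrix (Fin (3*n+3)) (Fin (6*n)) ℕ :=
  Matrix.of fun m r =>
    (![eN (3*n+3) 1 + eN (3*n+3) (3*((r : ℕ)/6+1)-1),
       eN (3*n+3) (1+3*((r : ℕ)/6+1)),
       eN (3*n+3) (1+3*((r : ℕ)/6+1)),
       eN (3*n+3) 3 + eN (3*n+3) (2+3*((r : ℕ)/6+1)),
       eN (3*n+3) (3+3*((r : ℕ)/6+1)),
       eN (3*n+3) (3+3*((r : ℕ)/6+1))])
      ⟨(r : ℕ) % 6, Nat.mod_lt _ (by norm_num)⟩ m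

/-- The monomial map `Φ(x)_j = ∏ₘ xₘ^{Y_{mj}}`. -/
def Phi (n : ℕ) (x : Fin (3*n+3) → ℝ) : Fin (6*n) → ℝ :=
  fun r => ∏ m, x m ^ (Ymat n m r)

/-- The conservation matrix `Z` (rows `z1, z2, z3`). -/
def Zmat (n : ℕ) : Matrix (Fin 3) (Fin (3*n+3)) ℝ :=
  Matrix.of fun r j =>
    if (r : ℕ) = 0 then (if (j : ℕ) % 3 = 0 then 1 else 0)
    else if (r : ℕ) = 1 then
      (if (j : ℕ) % 3 = 1 then 1 else if (j : ℕ) = 0 ∨ (j : ℕ) = 2 then -1 else 0)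
    else (if (j : ℕ) % 3 = 2 then 1 else 0)

/-- The `6 × 3` block `E0`. -/
def E0 : Fin 6 → Fin 3 → ℝ :=
  ![![1,0,1], ![1,0,0], ![0,0,1], ![0,1,1], ![0,1,0], ![0,0,1]]

/-- The block diagonal matrix `E` with `n` copies of `E0`. -/
def Emat (n : ℕ) : Matrix (Fin (6*n)) (Fin (3*n)) ℝ :=
  Matrix.of fun r c =>
    if (r : ℕ) / 6 = (c : ℕ) / 3 then
      E0 ⟨(r : ℕ) % 6, Nat.mod_lt _ (by norm_num)⟩ ⟨(c : ℕ) % 3, Nat.mod_lt _ (by norm_num)⟩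
    else 0

/-- The matrix `L ∈ ℤ^{(3+3n)×3}`: row `1 = (1, n−1, −1)`, row `2 = (−1, −n, 0)`,
row `3 = (1, n−2, −1)`, and for `i = 1,…,n` rows `1+3i` and `3+3i` equal
`(0, i−2, −1)` while row `2+3i = (−1, i−n, 0)`. -/
def Lmat (n : ℕ) : Matrix (Fin (3*n+3)) (Fin 3) ℤ :=
  Matrix.of fun j c =>
    if (j : ℕ) = 0 then ![1, (n : ℤ) - 1, -1] c
    else if (j : ℕ) = 1 then ![-1, -(n : ℤ), 0] c
    else if (j : ℕ) = 2 then ![1, (n : ℤ) - 2, -1] c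
    else if (j : ℕ) % 3 = 1 then ![-1, (((j : ℕ) / 3 : ℕ) : ℤ) - (n : ℤ), 0] c
    else ![0, (((j : ℕ) / 3 : ℕ) : ℤ) - 2, -1] c

/-- `g^L ∈ ℝ_{>0}^{3+3n}`, `(g^L)_j = g₁^{L_{j1}} g₂^{L_{j2}} g₃^{L_{j3}}`. -/
def gL (n : ℕ) (g : Fin 3 → ℝ) : Fin (3*n+3) → ℝ :=
  fun j => ∏ c, g c ^ (Lmat n j c)

/-- The coset condition map `Θ(g,a) = Z diag(a) (g^L − 𝟙)`. -/
def Theta (n : ℕ) (g : Fin 3 → ℝ) (a : Fin (3*n+3) → ℝ) : Fin 3 → ℝ :=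
  (Zmat n).mulVec (fun j => a j * (gL n g j - 1))

/-- The rate constants `κ(a,λ)_j = (Eλ)_j / Φ(a)_j`. -/
def kappaOf (n : ℕ) (a : Fin (3*n+3) → ℝ) (lam : Fin (3*n) → ℝ) : Fin (6*n) → ℝ :=
  fun r => (Emat n).mulVec lam r / Phi n a r

/-- `x` is a (positive) steady state of `ẋ = S diag(κ) Φ(x)`. -/
def isSteady (n : ℕ) (κ : Fin (6*n) → ℝ) (x : Fin (3*n+3) → ℝ) : Prop :=
  (Smat n).mulVec (fun r => κ r * Phi n x r) = 0

/-- The `1`-based component `a_j` of a vector `a ∈ ℝ^{3+3n}`. -/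
def av (n : ℕ) (a : Fin (3*n+3) → ℝ) (j : ℕ) : ℝ :=
  if h : j - 1 < 3*n+3 then a ⟨j - 1, h⟩ else 0

/-- `ω1 = Σ_{k=0}^n a_{1+3k}`. -/
def om1 (n : ℕ) (a : Fin (3*n+3) → ℝ) : ℝ := ∑ k ∈ Finset.range (n+1), av n a (1+3*k)

/-- `ω2 = −a₁ − a₃ + Σ_{k=0}^n a_{2+3k}`. -/
def om2 (n : ℕ) (a : Fin (3*n+3) → ℝ) : ℝ :=
  -(av n a 1) - av n a 3 + ∑ k ∈ Finset.range (n+1), av n a (2+3*k)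

/-- `ω3 = Σ_{k=0}^n a_{3+3k}`. -/
def om3 (n : ℕ) (a : Fin (3*n+3) → ℝ) : ℝ := ∑ k ∈ Finset.range (n+1), av n a (3+3*k)

/-- `Ω2(ξ) = Σ_{k=0}^n a_{2+3k} ξ^k`. -/
def Om2 (n : ℕ) (a : Fin (3*n+3) → ℝ) (ξ : ℝ) : ℝ :=
  ∑ k ∈ Finset.range (n+1), av n a (2+3*k) * ξ ^ k

/-- `Ω4(ξ) = Σ_{k=1}^n a_{1+3k} ξ^{k−1}`. -/
def Om4 (n : ℕ) (a : Fin (3*n+3) → ℝ) (ξ : ℝ) : ℝ :=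
  ∑ k ∈ Finset.Icc 1 n, av n a (1+3*k) * ξ ^ (k-1)

/-- `Ω6(ξ) = Σ_{k=1}^n a_{3+3k} ξ^{k−1}`. -/
def Om6 (n : ℕ) (a : Fin (3*n+3) → ℝ) (ξ : ℝ) : ℝ :=
  ∑ k ∈ Finset.Icc 1 n, av n a (3+3*k) * ξ ^ (k-1)

/-- `Δ(ξ) = (a₁/ω1)ξ − a₃/ω3`. -/
def Dlt (n : ℕ) (a : Fin (3*n+3) → ℝ) (ξ : ℝ) : ℝ :=
  av n a 1 / om1 n a * ξ - av n a 3 / om3 n a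

/-- `ξ* = (ω1 a₃)/(a₁ ω3)`. -/
def xistar (n : ℕ) (a : Fin (3*n+3) → ℝ) : ℝ :=
  om1 n a * av n a 3 / (av n a 1 * om3 n a)

/-- `F1(ξ) = Ω6(ξ)/ω3 − Ω4(ξ)/ω1`. -/
def F1 (n : ℕ) (a : Fin (3*n+3) → ℝ) (ξ : ℝ) : ℝ :=
  Om6 n a ξ / om3 n a - Om4 n a ξ / om1 n a

/-- `F3(ξ) = (a₁ξ/ω1)(Ω6(ξ)/ω3) − (a₃/ω3)(Ω4(ξ)/ω1)`. -/
def F3 (n : ℕ) (a : Fin (3*n+3) → ℝ) (ξ : ℝ) : ℝ :=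
  av n a 1 * ξ / om1 n a * (Om6 n a ξ / om3 n a) - av n a 3 / om3 n a * (Om4 n a ξ / om1 n a)

/-- `A(ξ) = (Ω4(ξ)+Ω6(ξ))Ω2(ξ)`. -/
def Ap (n : ℕ) (a : Fin (3*n+3) → ℝ) (ξ : ℝ) : ℝ := (Om4 n a ξ + Om6 n a ξ) * Om2 n a ξ

/-- `B(ξ) = (a₁ξ + a₃)Ω2(ξ) − ω2 ξ (Ω4(ξ)+Ω6(ξ))`. -/
def Bp (n : ℕ) (a : Fin (3*n+3) → ℝ) (ξ : ℝ) : ℝ :=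
  (av n a 1 * ξ + av n a 3) * Om2 n a ξ - om2 n a * ξ * (Om4 n a ξ + Om6 n a ξ)

/-- `C(ξ) = ξ(a₁ξ + a₃)(ω1+ω2+ω3)`. -/
def Cp (n : ℕ) (a : Fin (3*n+3) → ℝ) (ξ : ℝ) : ℝ :=
  ξ * (av n a 1 * ξ + av n a 3) * (om1 n a + om2 n a + om3 n a)

/-- `P(ξ) = A(ξ)Δ(ξ)² + B(ξ)Δ(ξ)F1(ξ) − C(ξ)F1(ξ)²`. -/
def Pp (n : ℕ) (a : Fin (3*n+3) → ℝ) (ξ : ℝ) : ℝ :=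
  Ap n a ξ * (Dlt n a ξ)^2 + Bp n a ξ * Dlt n a ξ * F1 n a ξ - Cp n a ξ * (F1 n a ξ)^2

/-- `θ(ξ) = 2C(ξ)F1(ξ) − Δ(ξ)[B(ξ) + (B(ξ)² + 4A(ξ)C(ξ))^{1/2}]`. -/
def thetaFun (n : ℕ) (a : Fin (3*n+3) → ℝ) (ξ : ℝ) : ℝ :=
  2 * Cp n a ξ * F1 n a ξ -
    Dlt n a ξ * (Bp n a ξ + Real.sqrt ((Bp n a ξ)^2 + 4 * Ap n a ξ * Cp n a ξ))

/-- `g1(ξ) = ξ^{1−n} F1(ξ)/Δ(ξ)`. -/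
def g1f (n : ℕ) (a : Fin (3*n+3) → ℝ) (ξ : ℝ) : ℝ :=
  ξ ^ ((1 : ℤ) - (n : ℤ)) * F1 n a ξ / Dlt n a ξ

/-- `g3(ξ) = ξ^{−1} F3(ξ)/Δ(ξ)`. -/
def g3f (n : ℕ) (a : Fin (3*n+3) → ℝ) (ξ : ℝ) : ℝ :=
  ξ⁻¹ * F3 n a ξ / Dlt n a ξ

/-- The candidate second steady state `b = diag(g^L) a` built from a zero `ξ`
of the determining equation, with `g = (g1(ξ), ξ, g3(ξ))`. -/
def bOf (n : ℕ) (a : Fin (3*n+3) → ℝ) (ξ : ℝ) : Fin (3*n+3) → ℝ :=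
  fun j => gL n ![g1f n a ξ, ξ, g3f n a ξ] j * a j

end

-- ===== auxiliary development =====
section AuxA
variable {n : ℕ}

def rxn (n : ℕ) (i0 : Fin n) (s : Fin 6) : Fin (6*n) :=
  ⟨6*(i0:ℕ)+(s:ℕ), by have := i0.isLt; have := s.isLt; omega⟩

lemma pairlt {k n : ℕ} (i : Fin n) (s : Fin k) : k*(i:ℕ)+(s:ℕ) < k*n :=
  calc k*(i:ℕ)+(s:ℕ) < k*(i:ℕ)+k := by have := s.isLt; omega
    _ = k*((i:ℕ)+1) := by ring
    _ ≤ k*n := Nat.mul_le_mul_left k i.isLt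

lemma sum_fin_mul {M : Type*} [AddCommMonoid M] {k n : ℕ} (hk : 0 < k) (f : Fin (k*n) → M) :
    ∑ r, f r = ∑ i : Fin n, ∑ s : Fin k, f ⟨k*(i:ℕ)+(s:ℕ), pairlt i s⟩ := by
  have h2 : ∑ p : Fin n × Fin k, f ⟨k*(p.1:ℕ)+(p.2:ℕ), pairlt p.1 p.2⟩
      = ∑ i : Fin n, ∑ s : Fin k, f ⟨k*(i:ℕ)+(s:ℕ), pairlt i s⟩ :=
    Fintype.sum_prod_type _
  rw [← h2]
  refine Finset.sum_nbij' (fun r => (⟨(r:ℕ)/k, ?_⟩, ⟨(r:ℕ)%k, Nat.mod_lt _ hk⟩))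
    (fun p => ⟨k*(p.1:ℕ)+(p.2:ℕ), pairlt p.1 p.2⟩) (fun _ _ => Finset.mem_univ _)
    (fun _ _ => Finset.mem_univ _) ?_ ?_ ?_
  · exact (Nat.div_lt_iff_lt_mul hk).2 (lt_of_lt_of_le r.isLt (Nat.mul_comm k n).le)
  · intro r _; apply Fin.ext; simp [Nat.div_add_mod]
  · intro p _
    ext
    · show (k*(p.1:ℕ)+(p.2:ℕ))/k = (p.1:ℕ)
      rw [Nat.mul_add_div hk, Nat.div_eq_of_lt p.2.isLt]; omega
    · show (k*(p.1:ℕ)+(p.2:ℕ))%k = (p.2:ℕ)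
      rw [Nat.mul_add_mod, Nat.mod_eq_of_lt p.2.isLt]
  · intro r _; congr 1; apply Fin.ext; simp [Nat.div_add_mod]

lemma sum_rxn (f : Fin (6*n) → ℝ) :
    ∑ r, f r = ∑ i0 : Fin n, ∑ s : Fin 6, f (rxn n i0 s) :=
  sum_fin_mul (by norm_num) f

lemma e_of_ne {N j : ℕ} {m : Fin N} (h : (m:ℕ)+1 ≠ j) : e N j m = 0 := if_neg h
lemma e_of_eq {N j : ℕ} {m : Fin N} (h : (m:ℕ)+1 = j) : e N j m = 1 := if_pos h

lemma prod_pow_eN {N : ℕ} (x : Fin N → ℝ) {j : ℕ} (h1 : 1 ≤ j) (h2 : j ≤ N) :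
    ∏ m, x m ^ eN N j m = x ⟨j-1, by omega⟩ := by
  rw [Finset.prod_eq_single (⟨j-1, by omega⟩ : Fin N)]
  · simp [eN, Nat.sub_add_cancel h1]
  · intro m _ hm
    have : (m:ℕ)+1 ≠ j := fun hc => hm (Fin.ext (show (m:ℕ) = j-1 by omega))
    simp [eN, this]
  · simp

lemma prod_pow_add {N : ℕ} (x : Fin N → ℝ) (A B : Fin N → ℕ) :
    ∏ m, x m ^ (A m + B m) = (∏ m, x m ^ A m) * (∏ m, x m ^ B m) := by
  simp [pow_add, Finset.prod_mul_distrib]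

lemma Phi_rxn (x : Fin (3*n+3) → ℝ) (i0 : Fin n) (s : Fin 6) :
    Phi n x (rxn n i0 s) =
      ![x ⟨0, by omega⟩ * x ⟨3*(i0:ℕ)+1, by have := i0.isLt; omega⟩,
        x ⟨3*(i0:ℕ)+3, by have := i0.isLt; omega⟩,
        x ⟨3*(i0:ℕ)+3, by have := i0.isLt; omega⟩,
        x ⟨2, by omega⟩ * x ⟨3*(i0:ℕ)+4, by have := i0.isLt; omega⟩,
        x ⟨3*(i0:ℕ)+5, by have := i0.isLt; omega⟩,
        x ⟨3*(i0:ℕ)+5, by have := i0.isLt; omega⟩] s := by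
  have hi := i0.isLt
  unfold Phi Ymat rxn
  fin_cases s <;>
  · simp only [Matrix.of_apply, Fin.val_mk, Nat.mul_add_mod,
      Nat.mul_add_div (show (0:ℕ)<6 by norm_num)]
    norm_num
    simp only [show (1+3*((i0:ℕ)+1)) = 3*(i0:ℕ)+4 from by omega,
      show (3*((i0:ℕ)+1)-1) = 3*(i0:ℕ)+2 from by omega,
      show (2+3*((i0:ℕ)+1)) = 3*(i0:ℕ)+5 from by omega,
      show (3+3*((i0:ℕ)+1)) = 3*(i0:ℕ)+6 from by omega]
    first
    | rw [prod_pow_add, prod_pow_eN x (by omega) (by omega),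
        prod_pow_eN x (by omega) (by omega)]
    | rw [prod_pow_eN x (by omega) (by omega)]
    simp only [show (3*(i0:ℕ)+2)-1 = 3*(i0:ℕ)+1 from by omega,
      show (3*(i0:ℕ)+4)-1 = 3*(i0:ℕ)+3 from by omega,
      show (3*(i0:ℕ)+5)-1 = 3*(i0:ℕ)+4 from by omega,
      show (3*(i0:ℕ)+6)-1 = 3*(i0:ℕ)+5 from by omega]
    try norm_num

lemma Smat_rxn (m : Fin (3*n+3)) (i0 : Fin n) (s : Fin 6) :
    Smat n m (rxn n i0 s) =
      ![e (3*n+3) (3*(i0:ℕ)+4) m - e (3*n+3) 1 m - e (3*n+3) (3*(i0:ℕ)+2) m,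
        e (3*n+3) 1 m + e (3*n+3) (3*(i0:ℕ)+2) m - e (3*n+3) (3*(i0:ℕ)+4) m,
        e (3*n+3) 1 m + e (3*n+3) (3*(i0:ℕ)+5) m - e (3*n+3) (3*(i0:ℕ)+4) m,
        e (3*n+3) (3*(i0:ℕ)+6) m - e (3*n+3) 3 m - e (3*n+3) (3*(i0:ℕ)+5) m,
        e (3*n+3) 3 m + e (3*n+3) (3*(i0:ℕ)+5) m - e (3*n+3) (3*(i0:ℕ)+6) m,
        e (3*n+3) 3 m + e (3*n+3) (3*(i0:ℕ)+2) m - e (3*n+3) (3*(i0:ℕ)+6) m] s := by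
  unfold Smat rxn
  fin_cases s <;>
  · simp only [Matrix.of_apply, Fin.val_mk, Nat.mul_add_mod,
      Nat.mul_add_div (show (0:ℕ)<6 by norm_num)]
    norm_num [Pi.add_apply, Pi.sub_apply]
    simp only [show (1+3*((i0:ℕ)+1)) = 3*(i0:ℕ)+4 from by omega,
      show (3*((i0:ℕ)+1)-1) = 3*(i0:ℕ)+2 from by omega,
      show (2+3*((i0:ℕ)+1)) = 3*(i0:ℕ)+5 from by omega,
      show (3+3*((i0:ℕ)+1)) = 3*(i0:ℕ)+6 from by omega]

lemma c60 {α : Type*} (a b c d f g : α) : ![a,b,c,d,f,g] (0 : Fin 6) = a := rfl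
lemma c61 {α : Type*} (a b c d f g : α) : ![a,b,c,d,f,g] (1 : Fin 6) = b := rfl
lemma c62 {α : Type*} (a b c d f g : α) : ![a,b,c,d,f,g] (2 : Fin 6) = c := rfl
lemma c63 {α : Type*} (a b c d f g : α) : ![a,b,c,d,f,g] (3 : Fin 6) = d := rfl
lemma c64 {α : Type*} (a b c d f g : α) : ![a,b,c,d,f,g] (4 : Fin 6) = f := rfl
lemma c65 {α : Type*} (a b c d f g : α) : ![a,b,c,d,f,g] (5 : Fin 6) = g := rfl

lemma E0_00 : E0 0 0 = 1 := rfl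
lemma E0_01 : E0 0 1 = 0 := rfl
lemma E0_02 : E0 0 2 = 1 := rfl
lemma E0_10 : E0 1 0 = 1 := rfl
lemma E0_11 : E0 1 1 = 0 := rfl
lemma E0_12 : E0 1 2 = 0 := rfl
lemma E0_20 : E0 2 0 = 0 := rfl
lemma E0_21 : E0 2 1 = 0 := rfl
lemma E0_22 : E0 2 2 = 1 := rfl
lemma E0_30 : E0 3 0 = 0 := rfl
lemma E0_31 : E0 3 1 = 1 := rfl
lemma E0_32 : E0 3 2 = 1 := rfl
lemma E0_40 : E0 4 0 = 0 := rfl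
lemma E0_41 : E0 4 1 = 1 := rfl
lemma E0_42 : E0 4 2 = 0 := rfl
lemma E0_50 : E0 5 0 = 0 := rfl
lemma E0_51 : E0 5 1 = 0 := rfl
lemma E0_52 : E0 5 2 = 1 := rfl

lemma Emat_rxn (lam : Fin (3*n) → ℝ) (i0 : Fin n) (s : Fin 6) :
    (Emat n).mulVec lam (rxn n i0 s) =
      E0 s 0 * lam ⟨3*(i0:ℕ), by have := i0.isLt; omega⟩
    + E0 s 1 * lam ⟨3*(i0:ℕ)+1, by have := i0.isLt; omega⟩
    + E0 s 2 * lam ⟨3*(i0:ℕ)+2, by have := i0.isLt; omega⟩ := by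
  have hls : ∀ c : Fin (3*n), (Emat n) (rxn n i0 s) c * lam c
      = (if (i0:ℕ) = (c:ℕ)/3 then
          E0 s ⟨(c:ℕ)%3, Nat.mod_lt _ (by norm_num)⟩ * lam c else 0) := by
    intro c
    unfold Emat rxn
    simp only [Matrix.of_apply, Fin.val_mk, Nat.mul_add_mod,
      Nat.mul_add_div (show (0:ℕ)<6 by norm_num), Nat.div_eq_of_lt s.isLt, Nat.add_zero]
    split_ifs
    · congr 2
      exact Fin.ext (by simp [Nat.mod_eq_of_lt s.isLt])
    · simp
  show ∑ c, (Emat n) (rxn n i0 s) c * lam c = _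
  rw [Finset.sum_congr rfl (fun c _ => hls c),
    sum_fin_mul (k := 3) (by norm_num)]
  rw [Finset.sum_eq_single i0]
  · have h3 : ∀ c0 : Fin 3, (3*(i0:ℕ)+(c0:ℕ))/3 = (i0:ℕ) := by
      intro c0
      rw [Nat.mul_add_div (by norm_num), Nat.div_eq_of_lt c0.isLt]; omega
    have h4 : ∀ c0 : Fin 3, (3*(i0:ℕ)+(c0:ℕ))%3 = (c0:ℕ) := by
      intro c0; rw [Nat.mul_add_mod, Nat.mod_eq_of_lt c0.isLt]
    rw [Fin.sum_univ_three]
    simp only [Fin.val_mk, h3, h4, if_pos rfl, Fin.eta]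
    norm_num
  · intro d _ hd
    have hdv : (i0:ℕ) ≠ (d:ℕ) := fun h => hd (Fin.ext h.symm)
    apply Finset.sum_eq_zero
    intro c0 _
    rw [if_neg]
    rw [Nat.mul_add_div (by norm_num), Nat.div_eq_of_lt c0.isLt]
    omega
  · intro h; exact absurd (Finset.mem_univ i0) h

lemma block_eval (m : Fin (3*n+3)) (i0 : Fin n) (v : Fin (6*n) → ℝ) :
    ∑ s : Fin 6, Smat n m (rxn n i0 s) * v (rxn n i0 s) =
      (e (3*n+3) (3*(i0:ℕ)+4) m - e (3*n+3) 1 m - e (3*n+3) (3*(i0:ℕ)+2) m) * v (rxn n i0 0)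
    + (e (3*n+3) 1 m + e (3*n+3) (3*(i0:ℕ)+2) m - e (3*n+3) (3*(i0:ℕ)+4) m) * v (rxn n i0 1)
    + (e (3*n+3) 1 m + e (3*n+3) (3*(i0:ℕ)+5) m - e (3*n+3) (3*(i0:ℕ)+4) m) * v (rxn n i0 2)
    + (e (3*n+3) (3*(i0:ℕ)+6) m - e (3*n+3) 3 m - e (3*n+3) (3*(i0:ℕ)+5) m) * v (rxn n i0 3)
    + (e (3*n+3) 3 m + e (3*n+3) (3*(i0:ℕ)+5) m - e (3*n+3) (3*(i0:ℕ)+6) m) * v (rxn n i0 4)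
    + (e (3*n+3) 3 m + e (3*n+3) (3*(i0:ℕ)+2) m - e (3*n+3) (3*(i0:ℕ)+6) m) * v (rxn n i0 5) := by
  rw [Fin.sum_univ_six]
  simp only [Smat_rxn, c60, c61, c62, c63, c64, c65]

lemma sum_eq_pair {M : Type*} [AddCommMonoid M] {n : ℕ} (f : Fin n → M) (dA dB : Fin n)
    (hne : dA ≠ dB) (h0 : ∀ d, d ≠ dA → d ≠ dB → f d = 0) :
    ∑ d, f d = f dA + f dB := by
  have hp : ∀ d ∈ Finset.univ, f d
      = (if d = dA then f dA else 0) + (if d = dB then f dB else 0) := by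
    intro d _
    by_cases h1 : d = dA
    · subst h1; rw [if_pos rfl, if_neg hne]; simp
    · by_cases h2 : d = dB
      · subst h2; rw [if_neg h1, if_pos rfl]; simp
      · rw [if_neg h1, if_neg h2, h0 d h1 h2]; simp
  rw [Finset.sum_congr rfl hp, Finset.sum_add_distrib]
  simp [Finset.sum_ite_eq']

end AuxA

noncomputable section AuxB
variable {n : ℕ}

def X0 (n : ℕ) (a b : Fin (3*n+3) → ℝ) (i0 : Fin n) : ℝ :=
  (b ⟨0, by omega⟩ * b ⟨3*(i0:ℕ)+1, by have := i0.isLt; omega⟩) /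
  (a ⟨0, by omega⟩ * a ⟨3*(i0:ℕ)+1, by have := i0.isLt; omega⟩)

def Pv (n : ℕ) (a b : Fin (3*n+3) → ℝ) (i0 : Fin n) : ℝ :=
  b ⟨3*(i0:ℕ)+3, by have := i0.isLt; omega⟩ / a ⟨3*(i0:ℕ)+3, by have := i0.isLt; omega⟩

def X3 (n : ℕ) (a b : Fin (3*n+3) → ℝ) (i0 : Fin n) : ℝ :=
  (b ⟨2, by omega⟩ * b ⟨3*(i0:ℕ)+4, by have := i0.isLt; omega⟩) /
  (a ⟨2, by omega⟩ * a ⟨3*(i0:ℕ)+4, by have := i0.isLt; omega⟩)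

def Qv (n : ℕ) (a b : Fin (3*n+3) → ℝ) (i0 : Fin n) : ℝ :=
  b ⟨3*(i0:ℕ)+5, by have := i0.isLt; omega⟩ / a ⟨3*(i0:ℕ)+5, by have := i0.isLt; omega⟩

def Rel (n : ℕ) (a b : Fin (3*n+3) → ℝ) : Prop :=
  ∀ i0 : Fin n, X0 n a b i0 = Pv n a b i0 ∧ X3 n a b i0 = Qv n a b i0
    ∧ Pv n a b i0 = Qv n a b i0

def l1 (n : ℕ) (lam : Fin (3*n) → ℝ) (i0 : Fin n) : ℝ :=
  lam ⟨3*(i0:ℕ), by have := i0.isLt; omega⟩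
def l2 (n : ℕ) (lam : Fin (3*n) → ℝ) (i0 : Fin n) : ℝ :=
  lam ⟨3*(i0:ℕ)+1, by have := i0.isLt; omega⟩
def l3 (n : ℕ) (lam : Fin (3*n) → ℝ) (i0 : Fin n) : ℝ :=
  lam ⟨3*(i0:ℕ)+2, by have := i0.isLt; omega⟩
end AuxB

section AuxC
variable {n : ℕ} (a lam b : (Fin (3*n+3) → ℝ)) -- dummy

lemma hv0 (a : Fin (3*n+3) → ℝ) (lam : Fin (3*n) → ℝ) (b : Fin (3*n+3) → ℝ) (i0 : Fin n) :
    kappaOf n a lam (rxn n i0 0) * Phi n b (rxn n i0 0)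
      = (l1 n lam i0 + l3 n lam i0) * X0 n a b i0 := by
  unfold kappaOf l1 l3 X0
  rw [Emat_rxn, Phi_rxn, Phi_rxn]
  simp only [c60, E0_00, E0_01, E0_02]
  ring

lemma hv1 (a : Fin (3*n+3) → ℝ) (lam : Fin (3*n) → ℝ) (b : Fin (3*n+3) → ℝ) (i0 : Fin n) :
    kappaOf n a lam (rxn n i0 1) * Phi n b (rxn n i0 1) = l1 n lam i0 * Pv n a b i0 := by
  unfold kappaOf l1 Pv
  rw [Emat_rxn, Phi_rxn, Phi_rxn]
  simp only [c61, E0_10, E0_11, E0_12]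
  ring

lemma hv2 (a : Fin (3*n+3) → ℝ) (lam : Fin (3*n) → ℝ) (b : Fin (3*n+3) → ℝ) (i0 : Fin n) :
    kappaOf n a lam (rxn n i0 2) * Phi n b (rxn n i0 2) = l3 n lam i0 * Pv n a b i0 := by
  unfold kappaOf l3 Pv
  rw [Emat_rxn, Phi_rxn, Phi_rxn]
  simp only [c62, E0_20, E0_21, E0_22]
  ring

lemma hv3 (a : Fin (3*n+3) → ℝ) (lam : Fin (3*n) → ℝ) (b : Fin (3*n+3) → ℝ) (i0 : Fin n) :
    kappaOf n a lam (rxn n i0 3) * Phi n b (rxn n i0 3)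
      = (l2 n lam i0 + l3 n lam i0) * X3 n a b i0 := by
  unfold kappaOf l2 l3 X3
  rw [Emat_rxn, Phi_rxn, Phi_rxn]
  simp only [c63, E0_30, E0_31, E0_32]
  ring

lemma hv4 (a : Fin (3*n+3) → ℝ) (lam : Fin (3*n) → ℝ) (b : Fin (3*n+3) → ℝ) (i0 : Fin n) :
    kappaOf n a lam (rxn n i0 4) * Phi n b (rxn n i0 4) = l2 n lam i0 * Qv n a b i0 := by
  unfold kappaOf l2 Qv
  rw [Emat_rxn, Phi_rxn, Phi_rxn]
  simp only [c64, E0_40, E0_41, E0_42]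
  ring

lemma hv5 (a : Fin (3*n+3) → ℝ) (lam : Fin (3*n) → ℝ) (b : Fin (3*n+3) → ℝ) (i0 : Fin n) :
    kappaOf n a lam (rxn n i0 5) * Phi n b (rxn n i0 5) = l3 n lam i0 * Qv n a b i0 := by
  unfold kappaOf l3 Qv
  rw [Emat_rxn, Phi_rxn, Phi_rxn]
  simp only [c65, E0_50, E0_51, E0_52]
  ring

lemma block_vanish (m : Fin (3*n+3)) (d : Fin n) (v : Fin (6*n) → ℝ)
    (h1 : (m:ℕ)+1 ≠ 1) (h3 : (m:ℕ)+1 ≠ 3)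
    (hB : (m:ℕ)+1 ≠ 3*(d:ℕ)+2) (hE1 : (m:ℕ)+1 ≠ 3*(d:ℕ)+4)
    (hC : (m:ℕ)+1 ≠ 3*(d:ℕ)+5) (hE3 : (m:ℕ)+1 ≠ 3*(d:ℕ)+6) :
    ∑ s : Fin 6, Smat n m (rxn n d s) * v (rxn n d s) = 0 := by
  rw [block_eval, e_of_ne h1, e_of_ne h3, e_of_ne hB, e_of_ne hE1, e_of_ne hC, e_of_ne hE3]
  ring

lemma block_E1 (m : Fin (3*n+3)) (d : Fin n) (v : Fin (6*n) → ℝ)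
    (h : (m:ℕ)+1 = 3*(d:ℕ)+4) :
    ∑ s : Fin 6, Smat n m (rxn n d s) * v (rxn n d s)
      = v (rxn n d 0) - v (rxn n d 1) - v (rxn n d 2) := by
  rw [block_eval, e_of_eq h, e_of_ne (show (m:ℕ)+1 ≠ 1 by omega),
    e_of_ne (show (m:ℕ)+1 ≠ 3 by omega), e_of_ne (show (m:ℕ)+1 ≠ 3*(d:ℕ)+2 by omega),
    e_of_ne (show (m:ℕ)+1 ≠ 3*(d:ℕ)+5 by omega), e_of_ne (show (m:ℕ)+1 ≠ 3*(d:ℕ)+6 by omega)]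
  ring

lemma block_E3 (m : Fin (3*n+3)) (d : Fin n) (v : Fin (6*n) → ℝ)
    (h : (m:ℕ)+1 = 3*(d:ℕ)+6) :
    ∑ s : Fin 6, Smat n m (rxn n d s) * v (rxn n d s)
      = v (rxn n d 3) - v (rxn n d 4) - v (rxn n d 5) := by
  rw [block_eval, e_of_eq h, e_of_ne (show (m:ℕ)+1 ≠ 1 by omega),
    e_of_ne (show (m:ℕ)+1 ≠ 3 by omega), e_of_ne (show (m:ℕ)+1 ≠ 3*(d:ℕ)+2 by omega),
    e_of_ne (show (m:ℕ)+1 ≠ 3*(d:ℕ)+4 by omega), e_of_ne (show (m:ℕ)+1 ≠ 3*(d:ℕ)+5 by omega)]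
  ring

lemma block_B (m : Fin (3*n+3)) (d : Fin n) (v : Fin (6*n) → ℝ)
    (h : (m:ℕ)+1 = 3*(d:ℕ)+2) :
    ∑ s : Fin 6, Smat n m (rxn n d s) * v (rxn n d s)
      = - v (rxn n d 0) + v (rxn n d 1) + v (rxn n d 5) := by
  rw [block_eval, e_of_eq h, e_of_ne (show (m:ℕ)+1 ≠ 1 by omega),
    e_of_ne (show (m:ℕ)+1 ≠ 3 by omega), e_of_ne (show (m:ℕ)+1 ≠ 3*(d:ℕ)+4 by omega),
    e_of_ne (show (m:ℕ)+1 ≠ 3*(d:ℕ)+5 by omega), e_of_ne (show (m:ℕ)+1 ≠ 3*(d:ℕ)+6 by omega)]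
  ring

lemma block_C (m : Fin (3*n+3)) (d : Fin n) (v : Fin (6*n) → ℝ)
    (h : (m:ℕ)+1 = 3*(d:ℕ)+5) :
    ∑ s : Fin 6, Smat n m (rxn n d s) * v (rxn n d s)
      = v (rxn n d 2) - v (rxn n d 3) + v (rxn n d 4) := by
  rw [block_eval, e_of_eq h, e_of_ne (show (m:ℕ)+1 ≠ 1 by omega),
    e_of_ne (show (m:ℕ)+1 ≠ 3 by omega), e_of_ne (show (m:ℕ)+1 ≠ 3*(d:ℕ)+2 by omega),
    e_of_ne (show (m:ℕ)+1 ≠ 3*(d:ℕ)+4 by omega), e_of_ne (show (m:ℕ)+1 ≠ 3*(d:ℕ)+6 by omega)]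
  ring

lemma steady_iff_rel (n : ℕ) (a : Fin (3*n+3) → ℝ) (ha : ∀ j, 0 < a j)
    (lam : Fin (3*n) → ℝ) (hlam : ∀ c, 0 < lam c)
    (b : Fin (3*n+3) → ℝ) :
    ((Smat n).mulVec (fun r => kappaOf n a lam r * Phi n b r) = 0) ↔ Rel n a b := by
  have hbl : ∀ m, (Smat n).mulVec (fun r => kappaOf n a lam r * Phi n b r) m
      = ∑ i0 : Fin n, ∑ s : Fin 6,
          Smat n m (rxn n i0 s) * (kappaOf n a lam (rxn n i0 s) * Phi n b (rxn n i0 s)) := by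
    intro m
    show ∑ r, Smat n m r * (kappaOf n a lam r * Phi n b r) = _
    exact sum_rxn _
  rw [funext_iff]
  simp only [hbl, Pi.zero_apply]
  have hl1 : ∀ i0 : Fin n, 0 < l1 n lam i0 := fun i0 => hlam _
  have hl2 : ∀ i0 : Fin n, 0 < l2 n lam i0 := fun i0 => hlam _
  have hl3 : ∀ i0 : Fin n, 0 < l3 n lam i0 := fun i0 => hlam _
  constructor
  · intro key
    -- Relation 1 : X0 = Pv, for every block
    have hXall : ∀ i0 : Fin n, X0 n a b i0 = Pv n a b i0 := by
      intro i0
      have hm1 : 3*(i0:ℕ)+3 < 3*n+3 := by have := i0.isLt; omega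
      have hval : ((⟨3*(i0:ℕ)+3, hm1⟩ : Fin (3*n+3)) : ℕ) = 3*(i0:ℕ)+3 := rfl
      have h1 := key ⟨3*(i0:ℕ)+3, hm1⟩
      rw [Finset.sum_eq_single i0
        (fun d _ hd => by
          have hdv : (d:ℕ) ≠ (i0:ℕ) := fun hh => hd (Fin.ext hh)
          exact block_vanish _ d (fun r => kappaOf n a lam r * Phi n b r) (by rw [hval]; omega) (by rw [hval]; omega)
            (by rw [hval]; omega) (by rw [hval]; omega) (by rw [hval]; omega)
            (by rw [hval]; omega))
        (fun hni => absurd (Finset.mem_univ i0) hni)] at h1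
      rw [block_E1 _ i0 (fun r => kappaOf n a lam r * Phi n b r) (by rw [hval]), hv0, hv1, hv2] at h1
      have h2 : (l1 n lam i0 + l3 n lam i0) * (X0 n a b i0 - Pv n a b i0) = 0 := by
        linear_combination h1
      rcases mul_eq_zero.mp h2 with h | h
      · nlinarith [hl1 i0, hl3 i0]
      · linarith
    -- Relation 2 : X3 = Qv, for every block
    have hX3all : ∀ i0 : Fin n, X3 n a b i0 = Qv n a b i0 := by
      intro i0
      have hm1 : 3*(i0:ℕ)+5 < 3*n+3 := by have := i0.isLt; omega
      have hval : ((⟨3*(i0:ℕ)+5, hm1⟩ : Fin (3*n+3)) : ℕ) = 3*(i0:ℕ)+5 := rfl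
      have h1 := key ⟨3*(i0:ℕ)+5, hm1⟩
      rw [Finset.sum_eq_single i0
        (fun d _ hd => by
          have hdv : (d:ℕ) ≠ (i0:ℕ) := fun hh => hd (Fin.ext hh)
          exact block_vanish _ d (fun r => kappaOf n a lam r * Phi n b r) (by rw [hval]; omega) (by rw [hval]; omega)
            (by rw [hval]; omega) (by rw [hval]; omega) (by rw [hval]; omega)
            (by rw [hval]; omega))
        (fun hni => absurd (Finset.mem_univ i0) hni)] at h1
      rw [block_E3 _ i0 (fun r => kappaOf n a lam r * Phi n b r) (by rw [hval]), hv3, hv4, hv5] at h1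
      have h2 : (l2 n lam i0 + l3 n lam i0) * (X3 n a b i0 - Qv n a b i0) = 0 := by
        linear_combination h1
      rcases mul_eq_zero.mp h2 with h | h
      · nlinarith [hl2 i0, hl3 i0]
      · linarith
    -- Relation 3 : Pv = Qv, by induction along the chain
    have main : ∀ (I : ℕ) (hI : I < n), Pv n a b ⟨I, hI⟩ = Qv n a b ⟨I, hI⟩ := by
      intro I
      induction I with
      | zero =>
        intro hI
        have hm1 : (1:ℕ) < 3*n+3 := by omega
        have hval : ((⟨1, hm1⟩ : Fin (3*n+3)) : ℕ) = 1 := rfl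
        have hval0 : ((⟨0, hI⟩ : Fin n) : ℕ) = 0 := rfl
        have h1 := key ⟨1, hm1⟩
        rw [Finset.sum_eq_single (⟨0, hI⟩ : Fin n)
          (fun d _ hd => by
            have hdv : (d:ℕ) ≠ 0 := fun hh => hd (Fin.ext (by omega))
            exact block_vanish _ d (fun r => kappaOf n a lam r * Phi n b r) (by rw [hval]; omega) (by rw [hval]; omega)
              (by rw [hval]; omega) (by rw [hval]; omega) (by rw [hval]; omega)
              (by rw [hval]; omega))
          (fun hni => absurd (Finset.mem_univ _) hni)] at h1
        rw [block_B _ ⟨0, hI⟩ (fun r => kappaOf n a lam r * Phi n b r) (by rw [hval, hval0]), hv0, hv1, hv5] at h1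
        have h2 : l3 n lam ⟨0, hI⟩ * (Qv n a b ⟨0, hI⟩ - Pv n a b ⟨0, hI⟩) = 0 := by
          linear_combination h1 + (l1 n lam ⟨0, hI⟩ + l3 n lam ⟨0, hI⟩) * hXall ⟨0, hI⟩
        rcases mul_eq_zero.mp h2 with h | h
        · nlinarith [hl3 (⟨0, hI⟩ : Fin n)]
        · linarith
      | succ I ih =>
        intro hI
        have hI' : I < n := Nat.lt_of_succ_lt hI
        have hm1 : 3*I+4 < 3*n+3 := by omega
        have hval : ((⟨3*I+4, hm1⟩ : Fin (3*n+3)) : ℕ) = 3*I+4 := rfl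
        have hvA : ((⟨I, hI'⟩ : Fin n) : ℕ) = I := rfl
        have hvB : ((⟨I+1, hI⟩ : Fin n) : ℕ) = I+1 := rfl
        have h1 := key ⟨3*I+4, hm1⟩
        rw [sum_eq_pair _ (⟨I, hI'⟩ : Fin n) (⟨I+1, hI⟩ : Fin n)
          (fun hh => by rw [Fin.ext_iff, hvA, hvB] at hh; omega)
          (fun d hdA hdB => by
            have hdvA : (d:ℕ) ≠ I := fun hh => hdA (Fin.ext (by omega))
            have hdvB : (d:ℕ) ≠ I+1 := fun hh => hdB (Fin.ext (by omega))
            exact block_vanish _ d (fun r => kappaOf n a lam r * Phi n b r) (by rw [hval]; omega) (by rw [hval]; omega)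
              (by rw [hval]; omega) (by rw [hval]; omega) (by rw [hval]; omega)
              (by rw [hval]; omega))] at h1
        rw [block_C _ ⟨I, hI'⟩ (fun r => kappaOf n a lam r * Phi n b r) (by rw [hval, hvA]),
          block_B _ ⟨I+1, hI⟩ (fun r => kappaOf n a lam r * Phi n b r) (by rw [hval, hvB]; omega),
          hv0, hv1, hv2, hv3, hv4, hv5] at h1
        have h2 : l3 n lam ⟨I+1, hI⟩ * (Qv n a b ⟨I+1, hI⟩ - Pv n a b ⟨I+1, hI⟩) = 0 := by
          linear_combination h1 + (l2 n lam ⟨I, hI'⟩ + l3 n lam ⟨I, hI'⟩) * hX3all ⟨I, hI'⟩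
            - l3 n lam ⟨I, hI'⟩ * ih hI'
            + (l1 n lam ⟨I+1, hI⟩ + l3 n lam ⟨I+1, hI⟩) * hXall ⟨I+1, hI⟩
        rcases mul_eq_zero.mp h2 with h | h
        · nlinarith [hl3 (⟨I+1, hI⟩ : Fin n)]
        · linarith
    exact fun i0 => ⟨hXall i0, hX3all i0, main i0 i0.isLt⟩
  · intro hrel m
    apply Finset.sum_eq_zero
    intro i0 _
    rw [block_eval m i0 (fun r => kappaOf n a lam r * Phi n b r), hv0, hv1, hv2, hv3, hv4, hv5,
      (hrel i0).1, (hrel i0).2.1, (hrel i0).2.2]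
    ring

end AuxC

noncomputable section AuxD
variable {n : ℕ}

lemma c30 {α : Type*} (x y z : α) : ![x,y,z] (0 : Fin 3) = x := rfl
lemma c31 {α : Type*} (x y z : α) : ![x,y,z] (1 : Fin 3) = y := rfl
lemma c32 {α : Type*} (x y z : α) : ![x,y,z] (2 : Fin 3) = z := rfl

lemma gL_expand (g : Fin 3 → ℝ) (j : Fin (3*n+3)) :
    gL n g j = g 0 ^ (Lmat n j 0) * g 1 ^ (Lmat n j 1) * g 2 ^ (Lmat n j 2) := by
  unfold gL; rw [Fin.prod_univ_three]

lemma gL_zero (g : Fin 3 → ℝ) (j : Fin (3*n+3)) (hj : (j:ℕ) = 0) :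
    gL n g j = g 0 * g 1 ^ ((n:ℤ)-1) * (g 2)⁻¹ := by
  rw [gL_expand]; unfold Lmat
  simp only [Matrix.of_apply, hj, if_pos rfl, if_true, eq_self_iff_true, c30, c31, c32, zpow_one, zpow_neg_one]

lemma gL_two (g : Fin 3 → ℝ) (j : Fin (3*n+3)) (hj : (j:ℕ) = 2) :
    gL n g j = g 0 * g 1 ^ ((n:ℤ)-2) * (g 2)⁻¹ := by
  rw [gL_expand]; unfold Lmat
  simp only [Matrix.of_apply, hj,
    if_neg (show ¬((2:ℕ) = 0) by omega), if_neg (show ¬((2:ℕ) = 1) by omega),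
    if_pos rfl, if_true, eq_self_iff_true, c30, c31, c32, zpow_one, zpow_neg_one]

lemma gL_r1 (g : Fin 3 → ℝ) (j : Fin (3*n+3)) (k : ℕ) (hj : (j:ℕ) = 3*k+1) :
    gL n g j = (g 0)⁻¹ * g 1 ^ ((k:ℤ)-(n:ℤ)) := by
  rw [gL_expand]; unfold Lmat
  rcases Nat.eq_zero_or_pos k with hk | hk
  · subst hk
    simp only [Matrix.of_apply, hj, if_neg (show ¬((3*0+1:ℕ) = 0) by omega),
      if_pos (show (3*0+1:ℕ) = 1 by omega), c30, c31, c32, zpow_neg_one, zpow_zero, mul_one]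
    norm_num
  · simp only [Matrix.of_apply, hj, if_neg (show ¬(3*k+1 = 0) by omega),
      if_neg (show ¬(3*k+1 = 1) by omega), if_neg (show ¬(3*k+1 = 2) by omega),
      if_pos (show (3*k+1) % 3 = 1 by omega), show (3*k+1)/3 = k by omega,
      c30, c31, c32, zpow_neg_one, zpow_zero, mul_one]

lemma gL_r0 (g : Fin 3 → ℝ) (j : Fin (3*n+3)) (k : ℕ) (hk : 1 ≤ k) (hj : (j:ℕ) = 3*k) :
    gL n g j = g 1 ^ ((k:ℤ)-2) * (g 2)⁻¹ := by
  rw [gL_expand]; unfold Lmat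
  simp only [Matrix.of_apply, hj, if_neg (show ¬(3*k = 0) by omega),
    if_neg (show ¬(3*k = 1) by omega), if_neg (show ¬(3*k = 2) by omega),
    if_neg (show ¬((3*k) % 3 = 1) by omega), show (3*k)/3 = k by omega,
    c30, c31, c32, zpow_neg_one, zpow_zero, one_mul]

lemma gL_r2 (g : Fin 3 → ℝ) (j : Fin (3*n+3)) (k : ℕ) (hk : 1 ≤ k) (hj : (j:ℕ) = 3*k+2) :
    gL n g j = g 1 ^ ((k:ℤ)-2) * (g 2)⁻¹ := by
  rw [gL_expand]; unfold Lmat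
  simp only [Matrix.of_apply, hj, if_neg (show ¬(3*k+2 = 0) by omega),
    if_neg (show ¬(3*k+2 = 1) by omega), if_neg (show ¬(3*k+2 = 2) by omega),
    if_neg (show ¬((3*k+2) % 3 = 1) by omega), show (3*k+2)/3 = k by omega,
    c30, c31, c32, zpow_neg_one, zpow_zero, one_mul]

lemma abstract_g (n : ℕ) (t : ℕ → ℝ) (ht : ∀ j, 0 < t j)
    (R1 : ∀ k, k < n → t 0 * t (3*k+1) = t (3*k+3))
    (R2 : ∀ k, k < n → t 2 * t (3*k+4) = t (3*k+5))
    (R3 : ∀ k, k < n → t (3*k+3) = t (3*k+5)) :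
    ∃ g : Fin 3 → ℝ, (∀ i, 0 < g i) ∧
      (∀ k, k ≤ n → t (3*k+1) = (g 0)⁻¹ * g 1 ^ ((k:ℤ)-(n:ℤ)))
    ∧ (t 0 = g 0 * g 1 ^ ((n:ℤ)-1) * (g 2)⁻¹)
    ∧ (t 2 = g 0 * g 1 ^ ((n:ℤ)-2) * (g 2)⁻¹)
    ∧ (∀ k, 1 ≤ k → k ≤ n → t (3*k) = g 1 ^ ((k:ℤ)-2) * (g 2)⁻¹)
    ∧ (∀ k, 1 ≤ k → k ≤ n → t (3*k+2) = g 1 ^ ((k:ℤ)-2) * (g 2)⁻¹) := by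
  have htne : ∀ j, t j ≠ 0 := fun j => ne_of_gt (ht j)
  set γ1 : ℝ := t 0 / t 2 with hγ1
  set γ0 : ℝ := γ1 ^ (-(n:ℤ)) / t 1 with hγ0
  set γ2 : ℝ := γ0 * γ1 ^ ((n:ℤ)-1) / t 0 with hγ2
  have hγ1p : 0 < γ1 := div_pos (ht 0) (ht 2)
  have hγ0p : 0 < γ0 := div_pos (zpow_pos hγ1p _) (ht 1)
  have hγ2p : 0 < γ2 := div_pos (mul_pos hγ0p (zpow_pos hγ1p _)) (ht 0)
  have hγ1n : γ1 ≠ 0 := ne_of_gt hγ1p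
  have hγ0n : γ0 ≠ 0 := ne_of_gt hγ0p
  have hγ2n : γ2 ≠ 0 := ne_of_gt hγ2p
  have claimA : ∀ k, k ≤ n → t (3*k+1) = γ0⁻¹ * γ1 ^ ((k:ℤ)-(n:ℤ)) := by
    intro k
    induction k with
    | zero =>
      intro _
      rw [show (3*0+1 : ℕ) = 1 from rfl, show ((0:ℕ):ℤ)-(n:ℤ) = -(n:ℤ) by norm_num, hγ0]
      have hx : γ1 ^ (-(n:ℤ)) ≠ 0 := zpow_ne_zero _ hγ1n
      field_simp
    | succ k ih =>
      intro hk
      have hkn : k < n := by omega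
      have key : t (3*k+4) = γ1 * t (3*k+1) := by
        have r1 := R1 k hkn
        have r2 := R2 k hkn
        have r3 := R3 k hkn
        rw [hγ1]
        field_simp [htne 0, htne 2]
        linear_combination r2 - r3 - r1
      rw [show 3*(k+1)+1 = 3*k+4 by ring, key, ih (by omega),
        show ((k+1:ℕ):ℤ)-(n:ℤ) = 1 + ((k:ℤ)-(n:ℤ)) by push_cast; ring,
        zpow_add₀ hγ1n, zpow_one]
      ring
  have claim0 : t 0 = γ0 * γ1 ^ ((n:ℤ)-1) * γ2⁻¹ := by
    rw [hγ2]
    have hx : γ0 * γ1 ^ ((n:ℤ)-1) ≠ 0 := mul_ne_zero hγ0n (zpow_ne_zero _ hγ1n)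
    field_simp
  have claim2 : t 2 = γ0 * γ1 ^ ((n:ℤ)-2) * γ2⁻¹ := by
    have h12 : t 2 = t 0 / γ1 := by
      rw [hγ1]
      field_simp
      rw [mul_comm]
      exact (mul_div_cancel_left₀ _ (htne 0)).symm
    rw [h12, claim0, show (n:ℤ)-1 = ((n:ℤ)-2) + 1 by ring, zpow_add₀ hγ1n, zpow_one]
    field_simp
  have claimB : ∀ k, 1 ≤ k → k ≤ n → t (3*k) = γ1 ^ ((k:ℤ)-2) * γ2⁻¹ := by
    intro k hk1 hkn
    obtain ⟨km, rfl⟩ : ∃ km, k = km+1 := ⟨k-1, by omega⟩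
    have r1 := R1 km (by omega)
    rw [show 3*(km+1) = 3*km+3 by ring, ← r1, claim0, claimA km (by omega),
      show ((km+1:ℕ):ℤ)-2 = ((n:ℤ)-1) + (((km:ℕ):ℤ)-(n:ℤ)) by push_cast; ring,
      zpow_add₀ hγ1n]
    field_simp
  have claimC : ∀ k, 1 ≤ k → k ≤ n → t (3*k+2) = γ1 ^ ((k:ℤ)-2) * γ2⁻¹ := by
    intro k hk1 hkn
    obtain ⟨km, rfl⟩ : ∃ km, k = km+1 := ⟨k-1, by omega⟩
    have r3 := R3 km (by omega)
    have e1 : 3*(km+1)+2 = 3*km+5 := by ring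
    have e2 : 3*(km+1) = 3*km+3 := by ring
    rw [e1, ← r3, ← e2, claimB (km+1) (by omega) (by omega)]
  refine ⟨![γ0, γ1, γ2], ?_, ?_, ?_, ?_, ?_, ?_⟩
  · intro i
    fin_cases i
    · exact hγ0p
    · exact hγ1p
    · exact hγ2p
  · simp only [c30, c31, c32]; exact claimA
  · simp only [c30, c31, c32]; exact claim0
  · simp only [c30, c31, c32]; exact claim2
  · simp only [c30, c31, c32]; exact claimB
  · simp only [c30, c31, c32]; exact claimC

def tval (n : ℕ) (a b : Fin (3*n+3) → ℝ) (j : ℕ) : ℝ :=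
  if h : j < 3*n+3 then b ⟨j,h⟩ / a ⟨j,h⟩ else 1

lemma tval_lt (a b : Fin (3*n+3) → ℝ) {j : ℕ} (h : j < 3*n+3) :
    tval n a b j = b ⟨j,h⟩ / a ⟨j,h⟩ := dif_pos h

lemma g_iff_rel (n : ℕ) (a : Fin (3*n+3) → ℝ) (ha : ∀ j, 0 < a j)
    (b : Fin (3*n+3) → ℝ) (hb : ∀ j, 0 < b j) :
    (∃ g : Fin 3 → ℝ, (∀ i, 0 < g i) ∧ ∀ j, b j = gL n g j * a j) ↔ Rel n a b := by
  have ha' : ∀ j, a j ≠ 0 := fun j => ne_of_gt (ha j)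
  have hb' : ∀ j, b j ≠ 0 := fun j => ne_of_gt (hb j)
  constructor
  · rintro ⟨g, hgpos, hbg⟩ i0
    have hg : ∀ i, g i ≠ 0 := fun i => ne_of_gt (hgpos i)
    have hratio : ∀ j : Fin (3*n+3), b j / a j = gL n g j := fun j => by
      rw [hbg j, mul_div_assoc, div_self (ha' j), mul_one]
    have hi0 := i0.isLt
    refine ⟨?_, ?_, ?_⟩
    · unfold X0 Pv
      rw [← div_mul_div_comm, hratio, hratio, hratio,
        gL_zero g _ rfl, gL_r1 g _ (i0:ℕ) rfl,
        gL_r0 g _ ((i0:ℕ)+1) (by omega) (show (3*(i0:ℕ)+3) = 3*((i0:ℕ)+1) by ring)]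
      rw [show ((((i0:ℕ)+1:ℕ)):ℤ)-2 = ((n:ℤ)-1) + (((i0:ℕ):ℤ)-(n:ℤ)) by push_cast; ring,
        zpow_add₀ (hg 1)]
      field_simp [hg 0, hg 2]
    · unfold X3 Qv
      rw [← div_mul_div_comm, hratio, hratio, hratio,
        gL_two g _ rfl,
        gL_r1 g _ ((i0:ℕ)+1) (show (3*(i0:ℕ)+4) = 3*((i0:ℕ)+1)+1 by ring),
        gL_r2 g _ ((i0:ℕ)+1) (by omega) (show (3*(i0:ℕ)+5) = 3*((i0:ℕ)+1)+2 by ring)]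
      rw [show ((((i0:ℕ)+1:ℕ)):ℤ)-2 = ((n:ℤ)-2) + (((((i0:ℕ)+1:ℕ)):ℤ)-(n:ℤ)) by push_cast; ring,
        zpow_add₀ (hg 1)]
      field_simp [hg 0, hg 2]
    · unfold Pv Qv
      rw [hratio, hratio,
        gL_r0 g _ ((i0:ℕ)+1) (by omega) (show (3*(i0:ℕ)+3) = 3*((i0:ℕ)+1) by ring),
        gL_r2 g _ ((i0:ℕ)+1) (by omega) (show (3*(i0:ℕ)+5) = 3*((i0:ℕ)+1)+2 by ring)]
  · intro hrel
    obtain ⟨g, hgpos, cA, c0, c2, cB, cC⟩ := abstract_g n (tval n a b)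
      (fun j => by
        unfold tval
        split_ifs with h
        · exact div_pos (hb _) (ha _)
        · exact one_pos)
      (fun k hk => by
        rw [tval_lt a b (show (0:ℕ) < 3*n+3 by omega),
          tval_lt a b (show 3*k+1 < 3*n+3 by omega),
          tval_lt a b (show 3*k+3 < 3*n+3 by omega), div_mul_div_comm]
        exact (hrel ⟨k, hk⟩).1)
      (fun k hk => by
        rw [tval_lt a b (show (2:ℕ) < 3*n+3 by omega),
          tval_lt a b (show 3*k+4 < 3*n+3 by omega),
          tval_lt a b (show 3*k+5 < 3*n+3 by omega), div_mul_div_comm]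
        exact (hrel ⟨k, hk⟩).2.1)
      (fun k hk => by
        rw [tval_lt a b (show 3*k+3 < 3*n+3 by omega),
          tval_lt a b (show 3*k+5 < 3*n+3 by omega)]
        exact (hrel ⟨k, hk⟩).2.2)
    refine ⟨g, hgpos, fun j => ?_⟩
    have hjlt := j.isLt
    have conclude : ∀ (v : ℝ), b j / a j = v → b j = v * a j := fun v hv => by
      rw [← hv, div_mul_cancel₀ _ (ha' j)]
    have hd : (j:ℕ) = 0 ∨ (j:ℕ) = 2 ∨ (∃ k, (j:ℕ) = 3*k+1 ∧ k ≤ n)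
        ∨ (∃ k, 1 ≤ k ∧ k ≤ n ∧ (j:ℕ) = 3*k)
        ∨ (∃ k, 1 ≤ k ∧ k ≤ n ∧ (j:ℕ) = 3*k+2) := by
      have hm : (j:ℕ) % 3 = 0 ∨ (j:ℕ) % 3 = 1 ∨ (j:ℕ) % 3 = 2 := by omega
      rcases hm with hm | hm | hm
      · rcases Nat.eq_zero_or_pos (j:ℕ) with h0 | h0
        · exact Or.inl h0
        · exact Or.inr (Or.inr (Or.inr (Or.inl ⟨(j:ℕ)/3, by omega, by omega, by omega⟩)))
      · exact Or.inr (Or.inr (Or.inl ⟨(j:ℕ)/3, by omega, by omega⟩))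
      · rcases Nat.lt_or_ge (j:ℕ) 3 with h0 | h0
        · exact Or.inr (Or.inl (by omega))
        · exact Or.inr (Or.inr (Or.inr (Or.inr ⟨(j:ℕ)/3, by omega, by omega, by omega⟩)))
    rcases hd with h | h | ⟨k, hk, hkn⟩ | ⟨k, hk1, hkn, hk⟩ | ⟨k, hk1, hkn, hk⟩
    · refine conclude _ ?_
      rw [gL_zero g j h]
      have hth := c0
      rw [tval_lt a b (show (0:ℕ) < 3*n+3 by omega),
        show (⟨0, by omega⟩ : Fin (3*n+3)) = j from Fin.ext (show (0:ℕ) = (j:ℕ) from h.symm)] at hth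
      exact hth
    · refine conclude _ ?_
      rw [gL_two g j h]
      have hth := c2
      rw [tval_lt a b (show (2:ℕ) < 3*n+3 by omega),
        show (⟨2, by omega⟩ : Fin (3*n+3)) = j from Fin.ext (show (2:ℕ) = (j:ℕ) from h.symm)] at hth
      exact hth
    · refine conclude _ ?_
      rw [gL_r1 g j k hk]
      have hth := cA k hkn
      rw [tval_lt a b (show 3*k+1 < 3*n+3 by omega),
        show (⟨3*k+1, by omega⟩ : Fin (3*n+3)) = j from Fin.ext (show 3*k+1 = (j:ℕ) from hk.symm)] at hth
      exact hth
    · refine conclude _ ?_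
      rw [gL_r0 g j k hk1 hk]
      have hth := cB k hk1 hkn
      rw [tval_lt a b (show 3*k < 3*n+3 by omega),
        show (⟨3*k, by omega⟩ : Fin (3*n+3)) = j from Fin.ext (show 3*k = (j:ℕ) from hk.symm)] at hth
      exact hth
    · refine conclude _ ?_
      rw [gL_r2 g j k hk1 hk]
      have hth := cC k hk1 hkn
      rw [tval_lt a b (show 3*k+2 < 3*n+3 by omega),
        show (⟨3*k+2, by omega⟩ : Fin (3*n+3)) = j from Fin.ext (show 3*k+2 = (j:ℕ) from hk.symm)] at hth
      exact hth

lemma log_iff_g (n : ℕ) (a : Fin (3*n+3) → ℝ) (ha : ∀ j, 0 < a j)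
    (b : Fin (3*n+3) → ℝ) (hb : ∀ j, 0 < b j) :
    (∃ u : Fin 3 → ℝ, (fun j => Real.log (b j) - Real.log (a j))
        = ((Lmat n).map (fun z : ℤ => (z : ℝ))).mulVec u)
    ↔ (∃ g : Fin 3 → ℝ, (∀ i, 0 < g i) ∧ ∀ j, b j = gL n g j * a j) := by
  have hMV : ∀ (u : Fin 3 → ℝ) (j : Fin (3*n+3)),
      ((Lmat n).map (fun z : ℤ => (z : ℝ))).mulVec u j
        = ∑ c, ((Lmat n j c : ℤ) : ℝ) * u c := fun u j => rfl
  constructor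
  · rintro ⟨u, hu⟩
    refine ⟨fun c => Real.exp (u c), fun i => Real.exp_pos _, fun j => ?_⟩
    have hj := congrFun hu j
    rw [hMV] at hj
    have hzp : ∀ (x : ℝ) (kk : ℤ), Real.exp x ^ kk = Real.exp (kk * x) := by
      intro x kk
      rw [← Real.rpow_intCast (Real.exp x) kk, Real.rpow_def_of_pos (Real.exp_pos x),
        Real.log_exp, mul_comm]
    have hgl : gL n (fun c => Real.exp (u c)) j
        = Real.exp (∑ c, ((Lmat n j c : ℤ) : ℝ) * u c) := by
      rw [Real.exp_sum]
      unfold gL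
      exact Finset.prod_congr rfl (fun c _ => hzp (u c) (Lmat n j c))
    have hfin : Real.exp (Real.log (b j) - Real.log (a j)) * a j = b j := by
      rw [Real.exp_sub, Real.exp_log (hb j), Real.exp_log (ha j),
        div_mul_cancel₀ _ (ne_of_gt (ha j))]
    rw [hgl, ← hj, hfin]
  · rintro ⟨g, hgpos, hbg⟩
    refine ⟨fun c => Real.log (g c), ?_⟩
    funext j
    rw [hMV]
    have hglne : ∀ c ∈ (Finset.univ : Finset (Fin 3)),
        g c ^ (Lmat n j c) ≠ 0 :=
      fun c _ => zpow_ne_zero _ (ne_of_gt (hgpos c))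
    have h1 : Real.log (b j) = Real.log (gL n g j) + Real.log (a j) := by
      rw [hbg j, Real.log_mul (show gL n g j ≠ 0 from Finset.prod_ne_zero_iff.mpr hglne)
        (ne_of_gt (ha j))]
    have h2 : Real.log (gL n g j) = ∑ c, ((Lmat n j c : ℤ):ℝ) * Real.log (g c) := by
      unfold gL
      rw [Real.log_prod hglne]
      exact Finset.sum_congr rfl (fun c _ => by rw [Real.log_zpow])
    rw [h1, h2]
    ring

end AuxD

end Phos
namespace Phos

/-- `b ∈ ℝ_{>0}^{3+3n}` is a positive steady state of
`ẋ = S diag(κ(a,λ)) Φ(x)` iff `ln b − ln a ∈ im L`, equivalently iff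
`b = diag(g^L) a` for some `g ∈ ℝ_{>0}³`. -/
theorem steady_states_of_kappaOf (n : ℕ) (hn : 2 ≤ n)
    (a : Fin (3*n+3) → ℝ) (ha : ∀ j, 0 < a j)
    (lam : Fin (3*n) → ℝ) (hlam : ∀ c, 0 < lam c)
    (b : Fin (3*n+3) → ℝ) (hb : ∀ j, 0 < b j) :
    (isSteady n (kappaOf n a lam) b ↔
      ∃ u : Fin 3 → ℝ,
        (fun j => Real.log (b j) - Real.log (a j)) =
          ((Lmat n).map (fun z : ℤ => (z : ℝ))).mulVec u) ∧
    (isSteady n (kappaOf n a lam) b ↔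
      ∃ g : Fin 3 → ℝ, (∀ i, 0 < g i) ∧ ∀ j, b j = gL n g j * a j) := by
  have h1 := steady_iff_rel n a ha lam hlam b
  have h2 := g_iff_rel n a ha b hb
  have h3 := log_iff_g n a ha b hb
  exact ⟨h1.trans (h2.symm.trans h3.symm), h1.trans h2.symm⟩

end Phos
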